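/- Let X be a Banach space and D ⊆ X a closed convex set. The hyperspace of all nonempty bounded closed convex subsets of D, equipped with the Hausdorff distance and the family of metric segments given by [A,B] = {λA + (1−λ)B : λ ∈ [0,1]}, is a complete hyperbolic metric space. -/

import Mathlib

open Metric EMetric Set Pointwise Filter

variable {X : Type*} [NormedAddCommGroup X] [NormedSpace ℝ X]

/-- Membership in the hyperspace `𝒞ℬ(D)` of nonempty bounded closed convex subsets of `D`. -/
def MemCB (D A : Set X) : Prop :=
  A.Nonempty ∧ Bornology.IsBounded A ∧ IsClosed A ∧ Convex ℝ A ∧ A ⊆ D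

/-- The convex combination `λA + (1−λ)B` of two sets, i.e. the closure of the set of
convex combinations `λx + (1−λ)y`, `x ∈ A`, `y ∈ B`. -/
noncomputable def comb (l : ℝ) (A B : Set X) : Set X :=
  closure (l • A + (1 - l) • B)

section Aux

variable {D A B W Z : Set X}

/-- Finiteness of the Hausdorff edistance between two nonempty bounded sets. -/
lemma memCB_edist_ne_top (hA : MemCB D A) (hB : MemCB D B) :
    hausdorffEdist A B ≠ ⊤ :=
  hausdorffEdist_ne_top_of_nonempty_of_bounded hA.1 hB.1 hA.2.1 hB.2.1

lemma closure_add_closure_subset (s t : Set X) : closure s + closure t ⊆ closure (s + t) := by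
  rintro _ ⟨a, ha, b, hb, rfl⟩
  exact map_mem_closure₂ continuous_add ha hb fun x hx y hy => add_mem_add hx hy

/-- `comb l A B` is in `𝒞ℬ(D)`. -/
lemma memCB_comb (hDcl : IsClosed D) (hDco : Convex ℝ D) (hA : MemCB D A) (hB : MemCB D B)
    {l : ℝ} (h0 : 0 ≤ l) (h1 : l ≤ 1) : MemCB D (comb l A B) := by
  obtain ⟨hAne, hAb, hAcl, hAco, hAD⟩ := hA
  obtain ⟨hBne, hBb, hBcl, hBco, hBD⟩ := hB
  refine ⟨((hAne.smul_set).add (hBne.smul_set)).closure, (((hAb.smul₀ l).add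
    (hBb.smul₀ (1 - l)))).closure, isClosed_closure, ((hAco.smul l).add (hBco.smul (1 - l))).closure, ?_⟩
  rw [comb, hDcl.closure_subset_iff]
  rintro _ ⟨_, ⟨a, ha, rfl⟩, _, ⟨b, hb, rfl⟩, rfl⟩
  exact hDco (hAD ha) (hBD hb) h0 (by linarith) (by ring)

/-- `comb 1 A B = A`. -/
lemma comb_one (hAcl : IsClosed A) (hBne : B.Nonempty) : comb 1 A B = A := by
  rw [comb, one_smul, sub_self, zero_smul_set hBne, add_zero, hAcl.closure_eq]

/-- `comb 0 A B = B`. -/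
lemma comb_zero (hAne : A.Nonempty) (hBcl : IsClosed B) : comb 0 A B = B := by
  rw [comb, zero_smul_set hAne, sub_zero, one_smul, zero_add, hBcl.closure_eq]

/-- One-sided approximation direction. -/
lemma comb_dir (hWne : W.Nonempty) (hZne : Z.Nonempty) (finAW : hausdorffEdist A W ≠ ⊤)
    (finBZ : hausdorffEdist B Z ≠ ⊤) {t ε : ℝ} (hε : 0 < ε) (ht0 : 0 ≤ t) (ht1 : t ≤ 1) :
    ∀ x ∈ t • A + (1 - t) • B, ∃ y ∈ t • W + (1 - t) • Z,
      dist x y ≤ t * hausdorffDist A W + (1 - t) * hausdorffDist B Z + ε := by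
  rintro _ ⟨_, ⟨a, ha, rfl⟩, _, ⟨b, hb, rfl⟩, rfl⟩
  have h1 : infDist a W ≤ hausdorffDist A W := infDist_le_hausdorffDist_of_mem ha finAW
  have h2 : infDist b Z ≤ hausdorffDist B Z := infDist_le_hausdorffDist_of_mem hb finBZ
  obtain ⟨w, hw, hwd⟩ : ∃ w ∈ W, dist a w < hausdorffDist A W + ε :=
    (infDist_lt_iff hWne).1 (h1.trans_lt (lt_add_of_pos_right _ hε))
  obtain ⟨z, hz, hzd⟩ : ∃ z ∈ Z, dist b z < hausdorffDist B Z + ε :=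
    (infDist_lt_iff hZne).1 (h2.trans_lt (lt_add_of_pos_right _ hε))
  refine ⟨t • w + (1 - t) • z, add_mem_add (smul_mem_smul_set hw) (smul_mem_smul_set hz), ?_⟩
  calc dist (t • a + (1 - t) • b) (t • w + (1 - t) • z)
      ≤ dist (t • a) (t • w) + dist ((1 - t) • b) ((1 - t) • z) := dist_add_add_le _ _ _ _
    _ = t * dist a w + (1 - t) * dist b z := by
        rw [dist_smul₀, dist_smul₀, Real.norm_eq_abs, Real.norm_eq_abs,
          abs_of_nonneg ht0, abs_of_nonneg (by linarith : (0:ℝ) ≤ 1 - t)]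
    _ ≤ t * (hausdorffDist A W + ε) + (1 - t) * (hausdorffDist B Z + ε) := by
        have := dist_nonneg (x := a) (y := w)
        have := dist_nonneg (x := b) (y := z)
        nlinarith
    _ = t * hausdorffDist A W + (1 - t) * hausdorffDist B Z + ε := by ring

/-- The hyperbolicity inequality. -/
lemma hd_comb_le (hA : MemCB D A) (hB : MemCB D B) (hW : MemCB D W) (hZ : MemCB D Z)
    {t : ℝ} (ht0 : 0 ≤ t) (ht1 : t ≤ 1) :
    hausdorffDist (comb t A B) (comb t W Z) ≤
      t * hausdorffDist A W + (1 - t) * hausdorffDist B Z := by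
  rw [comb, comb, hausdorffDist_closure]
  refine le_of_forall_pos_le_add fun ε hε => ?_
  have hnn : 0 ≤ t * hausdorffDist A W + (1 - t) * hausdorffDist B Z + ε :=
    add_nonneg (add_nonneg (mul_nonneg ht0 hausdorffDist_nonneg)
      (mul_nonneg (by linarith) hausdorffDist_nonneg)) hε.le
  refine hausdorffDist_le_of_mem_dist hnn
    (comb_dir hW.1 hZ.1 (memCB_edist_ne_top hA hW) (memCB_edist_ne_top hB hZ) hε ht0 ht1) ?_
  intro x hx
  obtain ⟨y, hy, hxy⟩ := comb_dir hA.1 hB.1 (memCB_edist_ne_top hW hA)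
    (memCB_edist_ne_top hZ hB) hε ht0 ht1 x hx
  refine ⟨y, hy, ?_⟩
  rw [hausdorffDist_comm (s := A) (t := W), hausdorffDist_comm (s := B) (t := Z)]
  exact hxy

/-- Upper bound along a segment, ordered case. -/
lemma comb_dist_le (hA : MemCB D A) (hB : MemCB D B) {l m : ℝ}
    (hm0 : 0 ≤ m) (hml : m ≤ l) (hl1 : l ≤ 1) :
    hausdorffDist (comb l A B) (comb m A B) ≤ (l - m) * hausdorffDist A B := by
  rcases eq_or_lt_of_le hml with rfl | hlt
  · simp [hausdorffDist_self_zero]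
  obtain ⟨hAne, hAb, hAcl, hAco, hAD⟩ := hA
  obtain ⟨hBne, hBb, hBcl, hBco, hBD⟩ := hB
  have finAB : hausdorffEdist A B ≠ ⊤ :=
    hausdorffEdist_ne_top_of_nonempty_of_bounded hAne hBne hAb hBb
  have hm1 : m < 1 := lt_of_lt_of_le hlt hl1
  have hl0 : 0 < l := lt_of_le_of_lt hm0 hlt
  rw [comb, comb, hausdorffDist_closure]
  refine le_of_forall_pos_le_add fun ε hε => ?_
  have hnn : 0 ≤ (l - m) * hausdorffDist A B + ε :=
    add_nonneg (mul_nonneg (by linarith) hausdorffDist_nonneg) hε.le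
  have hε' : 0 < ε := hε
  have h1m : (1:ℝ) - m ≠ 0 := by linarith
  have hlne : l ≠ 0 := ne_of_gt hl0
  refine hausdorffDist_le_of_mem_dist hnn ?_ ?_
  · rintro _ ⟨_, ⟨a, ha, rfl⟩, _, ⟨b, hb, rfl⟩, rfl⟩
    have h1 : infDist a B ≤ hausdorffDist A B := infDist_le_hausdorffDist_of_mem ha finAB
    obtain ⟨b', hb', hbd⟩ : ∃ b' ∈ B, dist a b' < hausdorffDist A B + ε :=
      (infDist_lt_iff hBne).1 (h1.trans_lt (lt_add_of_pos_right _ hε))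
    set c : X := ((l - m) / (1 - m)) • b' + ((1 - l) / (1 - m)) • b with hc
    have hcB : c ∈ B := hBco hb' hb (div_nonneg (by linarith) (by linarith))
      (div_nonneg (by linarith) (by linarith))
      (by rw [← add_div, div_eq_one_iff_eq h1m]; ring)
    refine ⟨m • a + (1 - m) • c, add_mem_add (smul_mem_smul_set ha) (smul_mem_smul_set hcB), ?_⟩
    have hxy : (l • a + (1 - l) • b) - (m • a + (1 - m) • c) = (l - m) • (a - b') := by
      rw [hc]
      match_scalars <;> (field_simp; try ring)
    calc dist (l • a + (1 - l) • b) (m • a + (1 - m) • c)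
        = ‖(l - m) • (a - b')‖ := by rw [dist_eq_norm, hxy]
      _ = (l - m) * dist a b' := by
          rw [norm_smul, Real.norm_eq_abs, abs_of_nonneg (by linarith : (0:ℝ) ≤ l - m),
            dist_eq_norm]
      _ ≤ (l - m) * (hausdorffDist A B + ε) := by nlinarith [dist_nonneg (x := a) (y := b')]
      _ ≤ (l - m) * hausdorffDist A B + ε := by nlinarith
  · rintro _ ⟨_, ⟨a, ha, rfl⟩, _, ⟨b, hb, rfl⟩, rfl⟩
    have h1 : infDist b A ≤ hausdorffDist A B := by
      rw [hausdorffDist_comm]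
      exact infDist_le_hausdorffDist_of_mem hb (by rwa [hausdorffEdist_comm])
    obtain ⟨a', ha', had⟩ : ∃ a' ∈ A, dist b a' < hausdorffDist A B + ε :=
      (infDist_lt_iff hAne).1 (h1.trans_lt (lt_add_of_pos_right _ hε))
    set c : X := (m / l) • a + ((l - m) / l) • a' with hc
    have hcA : c ∈ A := hAco ha ha' (div_nonneg hm0 hl0.le) (div_nonneg (by linarith) hl0.le)
      (by rw [← add_div, div_eq_one_iff_eq hlne]; ring)
    refine ⟨l • c + (1 - l) • b, add_mem_add (smul_mem_smul_set hcA) (smul_mem_smul_set hb), ?_⟩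
    have hxy : (m • a + (1 - m) • b) - (l • c + (1 - l) • b) = (l - m) • (b - a') := by
      rw [hc]
      match_scalars <;> (field_simp; try ring)
    calc dist (m • a + (1 - m) • b) (l • c + (1 - l) • b)
        = ‖(l - m) • (b - a')‖ := by rw [dist_eq_norm, hxy]
      _ = (l - m) * dist b a' := by
          rw [norm_smul, Real.norm_eq_abs, abs_of_nonneg (by linarith : (0:ℝ) ≤ l - m),
            dist_eq_norm]
      _ ≤ (l - m) * (hausdorffDist A B + ε) := by nlinarith [dist_nonneg (x := b) (y := a')]
      _ ≤ (l - m) * hausdorffDist A B + ε := by nlinarith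

/-- The segment identity, ordered case. -/
lemma comb_dist_eq_aux (hDcl : IsClosed D) (hDco : Convex ℝ D)
    (hA : MemCB D A) (hB : MemCB D B) {l m : ℝ}
    (hm0 : 0 ≤ m) (hml : m ≤ l) (hl1 : l ≤ 1) :
    hausdorffDist (comb l A B) (comb m A B) = (l - m) * hausdorffDist A B := by
  have hl0 : 0 ≤ l := hm0.trans hml
  have hm1 : m ≤ 1 := hml.trans hl1
  refine le_antisymm (comb_dist_le hA hB hm0 hml hl1) ?_
  have hAeq : comb 1 A B = A := comb_one hA.2.2.1 hB.1
  have hBeq : comb 0 A B = B := comb_zero hA.1 hB.2.2.1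
  have t1 : hausdorffDist A (comb l A B) ≤ (1 - l) * hausdorffDist A B := by
    have := comb_dist_le hA hB (l := 1) (m := l) hl0 hl1 le_rfl
    rwa [hAeq] at this
  have t2 : hausdorffDist (comb m A B) B ≤ m * hausdorffDist A B := by
    have := comb_dist_le hA hB (l := m) (m := 0) le_rfl hm0 hm1
    rwa [hBeq, sub_zero] at this
  have hCl := memCB_comb hDcl hDco hA hB hl0 hl1
  have hCm := memCB_comb hDcl hDco hA hB hm0 hm1
  have tri : hausdorffDist A B ≤ hausdorffDist A (comb l A B) +
      hausdorffDist (comb l A B) (comb m A B) + hausdorffDist (comb m A B) B := by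
    calc hausdorffDist A B ≤ hausdorffDist A (comb m A B) + hausdorffDist (comb m A B) B :=
          hausdorffDist_triangle (memCB_edist_ne_top hA hCm)
      _ ≤ (hausdorffDist A (comb l A B) + hausdorffDist (comb l A B) (comb m A B)) +
          hausdorffDist (comb m A B) B := by
          gcongr
          exact hausdorffDist_triangle (memCB_edist_ne_top hA hCl)
  nlinarith [hausdorffDist_nonneg (s := A) (t := B)]

/-- The segment identity. -/
lemma comb_dist_eq (hDcl : IsClosed D) (hDco : Convex ℝ D)
    (hA : MemCB D A) (hB : MemCB D B) {l m : ℝ}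
    (hl : l ∈ Set.Icc (0:ℝ) 1) (hm : m ∈ Set.Icc (0:ℝ) 1) :
    hausdorffDist (comb l A B) (comb m A B) = |l - m| * hausdorffDist A B := by
  rcases le_total m l with h | h
  · rw [abs_of_nonneg (by linarith)]
    exact comb_dist_eq_aux hDcl hDco hA hB hm.1 h hl.2
  · rw [abs_of_nonpos (by linarith), hausdorffDist_comm, neg_sub]
    exact comb_dist_eq_aux hDcl hDco hA hB hl.1 h hm.2

/-- Subsegments are segments. -/
lemma comb_comb (hAco : Convex ℝ A) (hBco : Convex ℝ B) {l m t : ℝ}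
    (hl0 : 0 ≤ l) (hl1 : l ≤ 1) (hm0 : 0 ≤ m) (hm1 : m ≤ 1) (ht0 : 0 ≤ t) (ht1 : t ≤ 1) :
    comb t (comb l A B) (comb m A B) = comb (t * l + (1 - t) * m) A B := by
  set P : Set X := l • A + (1 - l) • B with hP
  set Q : Set X := m • A + (1 - m) • B with hQ
  have key : closure (t • closure P + (1 - t) • closure Q) = closure (t • P + (1 - t) • Q) := by
    refine Subset.antisymm (closure_minimal ?_ isClosed_closure)
      (closure_mono (add_subset_add (smul_set_mono subset_closure) (smul_set_mono subset_closure)))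
    refine ((add_subset_add (smul_closure_subset t P) (smul_closure_subset (1 - t) Q)).trans ?_)
    exact closure_add_closure_subset _ _
  have hPQ : t • P + (1 - t) • Q =
      (t * l + (1 - t) * m) • A + (1 - (t * l + (1 - t) * m)) • B := by
    have e1 : (t * l + (1 - t) * m) • A = (t * l) • A + ((1 - t) * m) • A :=
      hAco.add_smul (mul_nonneg ht0 hl0) (mul_nonneg (by linarith) hm0)
    have e2 : (1 - (t * l + (1 - t) * m)) • B = (t * (1 - l)) • B + ((1 - t) * (1 - m)) • B := by
      rw [← hBco.add_smul (mul_nonneg ht0 (by linarith)) (mul_nonneg (by linarith) (by linarith))]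
      congr 1
      ring
    rw [hP, hQ, smul_add, smul_add, smul_smul, smul_smul, smul_smul, smul_smul, e1, e2]
    exact add_add_add_comm _ _ _ _
  simp only [comb]
  rw [key, hPQ]


/-- Completeness of the hyperspace. -/
lemma memCB_complete {D : Set X} [CompleteSpace X] (hDcl : IsClosed D)
    (f : ℕ → Set X) (hf : ∀ n, MemCB D (f n))
    (hc : ∀ ε > (0 : ℝ), ∃ N, ∀ m ≥ N, ∀ n ≥ N, hausdorffDist (f m) (f n) < ε) :
    ∃ L : Set X, MemCB D L ∧
      Tendsto (fun n => hausdorffDist (f n) L) atTop (nhds 0) := by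
  have fin : ∀ m n, hausdorffEdist (f m) (f n) ≠ ⊤ := fun m n =>
    hausdorffEdist_ne_top_of_nonempty_of_bounded (hf m).1 (hf n).1 (hf m).2.1 (hf n).2.1
  set g : ℕ → TopologicalSpace.Closeds X := fun n => ⟨f n, (hf n).2.2.1⟩ with hgdef
  have hedist : ∀ m n, edist (g m) (g n) = hausdorffEdist (f m) (f n) := fun m n => rfl
  have hcauchy : CauchySeq g := by
    refine EMetric.cauchySeq_iff.2 fun ε hε => ?_
    obtain ⟨q, hq0, hqε⟩ := ENNReal.lt_iff_exists_nnreal_btwn.1 hε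
    have hq0' : (0:ℝ) < q := by exact_mod_cast hq0
    obtain ⟨N, hN⟩ := hc q hq0'
    refine ⟨N, fun m hm n hn => ?_⟩
    have h1 : hausdorffEdist (f m) (f n) = ENNReal.ofReal (hausdorffDist (f m) (f n)) :=
      (ENNReal.ofReal_toReal (fin m n)).symm
    rw [hedist, h1]
    calc ENNReal.ofReal (hausdorffDist (f m) (f n)) < ENNReal.ofReal q := by
          rw [ENNReal.ofReal_lt_ofReal_iff hq0']
          exact hN m hm n hn
      _ = (q : ENNReal) := ENNReal.ofReal_coe_nnreal
      _ < ε := hqε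
  obtain ⟨L, hL⟩ := cauchySeq_tendsto_of_complete hcauchy
  have hL' := EMetric.tendsto_atTop.1 hL
  have hten : Tendsto (fun n => hausdorffEdist (f n) (L : Set X)) atTop (nhds (0 : ENNReal)) := by
    refine ENNReal.tendsto_atTop_zero.2 fun ε hε => ?_
    obtain ⟨N, hN⟩ := hL' ε hε
    exact ⟨N, fun n hn => (hN n hn).le⟩
  have htend : Tendsto (fun n => hausdorffDist (f n) (L : Set X)) atTop (nhds 0) := by
    have h2 : Tendsto ENNReal.toReal (nhds (0 : ENNReal)) (nhds ((0 : ENNReal)).toReal) :=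
      ENNReal.tendsto_toReal (by simp)
    simpa [hausdorffDist, hausdorffEdist, Function.comp_def] using h2.comp hten
  have hev : ∀ᶠ n in atTop, hausdorffEdist (f n) (L : Set X) < 1 :=
    hten.eventually (gt_mem_nhds (by norm_num))
  obtain ⟨n0, hn0⟩ := hev.exists
  have hLne : (L : Set X).Nonempty :=
    nonempty_of_hausdorffEdist_ne_top (hf n0).1 (ne_top_of_lt hn0)
  have hLb : Bornology.IsBounded (L : Set X) := by
    have hsub : (L : Set X) ⊆ Metric.thickening 1 (f n0) := by
      intro x hx
      have h1 : infEdist x (f n0) ≤ hausdorffEdist (L : Set X) (f n0) :=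
        infEdist_le_hausdorffEdist_of_mem hx
      have h2 : infEdist x (f n0) < 1 := by
        rw [hausdorffEdist, hausdorffEDist_comm] at h1
        exact lt_of_le_of_lt h1 hn0
      rw [Metric.mem_thickening_iff_infEdist_lt]
      simpa [infEdist] using h2
    exact ((hf n0).2.1.thickening).subset hsub
  have hLD : (L : Set X) ⊆ D := by
    intro x hx
    have h0 : infEdist x D = 0 := by
      refine le_antisymm ?_ (zero_le)
      refine ge_of_tendsto' hten fun n => ?_
      calc infEdist x D ≤ infEdist x (f n) := infEdist_anti (hf n).2.2.2.2
        _ ≤ hausdorffEdist (L : Set X) (f n) := infEdist_le_hausdorffEdist_of_mem hx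
        _ = hausdorffEdist (f n) (L : Set X) := hausdorffEdist_comm
    have hmem : x ∈ closure D := EMetric.mem_closure_iff_infEdist_zero.2 h0
    rwa [hDcl.closure_eq] at hmem
  have hLco : Convex ℝ (L : Set X) := by
    intro x hx y hy a b ha hb hab
    have key : ∀ ε > (0:ℝ), infDist (a • x + b • y) (L : Set X) ≤ 2 * ε := by
      intro ε hε
      obtain ⟨n, hn1, hn2⟩ : ∃ n, hausdorffDist (f n) (L : Set X) < ε ∧
          hausdorffEdist (f n) (L : Set X) ≠ ⊤ := by
        have e1 : ∀ᶠ n in atTop, hausdorffDist (f n) (L : Set X) < ε :=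
          htend.eventually (gt_mem_nhds hε)
        have e2 : ∀ᶠ n in atTop, hausdorffEdist (f n) (L : Set X) ≠ ⊤ :=
          hev.mono fun n h => ne_top_of_lt h
        exact (e1.and e2).exists
      have hfnne := (hf n).1
      have hn2' : hausdorffEdist (L : Set X) (f n) ≠ ⊤ := by rwa [hausdorffEdist, hausdorffEDist_comm]
      have hx' : infDist x (f n) ≤ hausdorffDist (L : Set X) (f n) :=
        infDist_le_hausdorffDist_of_mem hx hn2'
      have hy' : infDist y (f n) ≤ hausdorffDist (L : Set X) (f n) :=
        infDist_le_hausdorffDist_of_mem hy hn2'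
      rw [hausdorffDist_comm] at hn1
      obtain ⟨x', hx'', hxd⟩ : ∃ x' ∈ f n, dist x x' < ε :=
        (infDist_lt_iff hfnne).1 (lt_of_le_of_lt hx' hn1)
      obtain ⟨y', hy'', hyd⟩ : ∃ y' ∈ f n, dist y y' < ε :=
        (infDist_lt_iff hfnne).1 (lt_of_le_of_lt hy' hn1)
      have hz' : a • x' + b • y' ∈ f n := (hf n).2.2.2.1 hx'' hy'' ha hb hab
      have hd1 : dist (a • x + b • y) (a • x' + b • y') ≤ ε := by
        calc dist (a • x + b • y) (a • x' + b • y')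
            ≤ dist (a • x) (a • x') + dist (b • y) (b • y') := dist_add_add_le _ _ _ _
          _ = a * dist x x' + b * dist y y' := by
              rw [dist_smul₀, dist_smul₀, Real.norm_eq_abs, Real.norm_eq_abs,
                abs_of_nonneg ha, abs_of_nonneg hb]
          _ ≤ a * ε + b * ε := by
              have := dist_nonneg (x := x) (y := x')
              have := dist_nonneg (x := y) (y := y')
              nlinarith
          _ = ε := by rw [← add_mul, hab, one_mul]
      calc infDist (a • x + b • y) (L : Set X)
          ≤ infDist (a • x + b • y) (f n) + hausdorffDist (f n) (L : Set X) :=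
            infDist_le_infDist_add_hausdorffDist hn2
        _ ≤ dist (a • x + b • y) (a • x' + b • y') + hausdorffDist (f n) (L : Set X) := by
            gcongr
            exact infDist_le_dist_of_mem hz'
        _ ≤ ε + ε := by
            rw [hausdorffDist_comm] at hn1
            exact add_le_add hd1 hn1.le
        _ = 2 * ε := by ring
    have h0 : infDist (a • x + b • y) (L : Set X) ≤ 0 := by
      refine le_of_forall_pos_le_add fun ε hε => ?_
      have := key (ε / 2) (by linarith)
      linarith
    have h0' : infDist (a • x + b • y) (L : Set X) = 0 := le_antisymm h0 infDist_nonneg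
    have hmem : a • x + b • y ∈ closure (L : Set X) :=
      (mem_closure_iff_infDist_zero hLne).2 h0'
    rwa [L.isClosed.closure_eq] at hmem
  exact ⟨L, ⟨hLne, hLb, L.isClosed, hLco, hLD⟩, htend⟩

end Aux

/-- The hyperspace `𝒞ℬ(D)` of nonempty bounded closed convex subsets of a closed convex set
`D` in a Banach space, with the Hausdorff distance and the metric segments
`[A,B] = {λA + (1−λ)B : λ ∈ [0,1]}`, is a complete hyperbolic metric space: the Hausdorff
distance is a (finite) metric on it, it is complete, each `[A,B]` is a metric segment
(closed under forming subsegments), and the hyperbolicity inequality holds. -/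
theorem CB_complete_hyperbolic {X : Type*} [NormedAddCommGroup X] [NormedSpace ℝ X]
    [CompleteSpace X] (D : Set X) (hDcl : IsClosed D) (hDco : Convex ℝ D) :
    -- the Hausdorff distance is a genuine metric on `𝒞ℬ(D)`
    (∀ A B : Set X, MemCB D A → MemCB D B →
      (hausdorffDist A B = 0 ↔ A = B)) ∧
    -- completeness
    (∀ f : ℕ → Set X, (∀ n, MemCB D (f n)) →
      (∀ ε > (0 : ℝ), ∃ N, ∀ m ≥ N, ∀ n ≥ N, hausdorffDist (f m) (f n) < ε) →
      ∃ L : Set X, MemCB D L ∧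
        Tendsto (fun n => hausdorffDist (f n) L) atTop (nhds 0)) ∧
    -- each `[A,B]` consists of members of `𝒞ℬ(D)` and is a metric segment
    (∀ A B : Set X, MemCB D A → MemCB D B →
      ∀ l ∈ Set.Icc (0 : ℝ) 1, MemCB D (comb l A B)) ∧
    (∀ A B : Set X, MemCB D A → MemCB D B →
      ∀ l ∈ Set.Icc (0 : ℝ) 1, ∀ m ∈ Set.Icc (0 : ℝ) 1,
        hausdorffDist (comb l A B) (comb m A B) = |l - m| * hausdorffDist A B) ∧
    -- hyperbolicity: `ρ((1−t)x ⊕ ty, (1−t)w ⊕ tz) ≤ (1−t)ρ(x,w) + tρ(y,z)`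
    (∀ A B W Z : Set X, MemCB D A → MemCB D B → MemCB D W → MemCB D Z →
      ∀ t ∈ Set.Icc (0 : ℝ) 1,
        hausdorffDist (comb (1 - t) A B) (comb (1 - t) W Z) ≤
          (1 - t) * hausdorffDist A W + t * hausdorffDist B Z) ∧
    -- the family of segments is closed under subsegments
    (∀ A B : Set X, MemCB D A → MemCB D B →
      ∀ l ∈ Set.Icc (0 : ℝ) 1, ∀ m ∈ Set.Icc (0 : ℝ) 1, ∀ t ∈ Set.Icc (0 : ℝ) 1,
        ∃ s ∈ Set.Icc (0 : ℝ) 1,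
          comb t (comb l A B) (comb m A B) = comb s A B) := by
  refine ⟨?_, ?_, ?_, ?_, ?_, ?_⟩
  · -- metric
    intro A B hA hB
    exact IsClosed.hausdorffDist_zero_iff_eq hA.2.2.1 hB.2.2.1 (memCB_edist_ne_top hA hB)
  · -- completeness
    intro f hf hc
    exact memCB_complete hDcl f hf hc
  · -- segments in CB
    intro A B hA hB l hl
    exact memCB_comb hDcl hDco hA hB hl.1 hl.2
  · -- segment identity
    intro A B hA hB l hl m hm
    exact comb_dist_eq hDcl hDco hA hB hl hm
  · -- hyperbolicity
    intro A B W Z hA hB hW hZ t ht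
    have := hd_comb_le hA hB hW hZ (t := 1 - t) (by linarith [ht.2]) (by linarith [ht.1])
    calc hausdorffDist (comb (1 - t) A B) (comb (1 - t) W Z)
        ≤ (1 - t) * hausdorffDist A W + (1 - (1 - t)) * hausdorffDist B Z := this
      _ = (1 - t) * hausdorffDist A W + t * hausdorffDist B Z := by ring
  · -- subsegments
    intro A B hA hB l hl m hm t ht
    refine ⟨t * l + (1 - t) * m, ⟨add_nonneg (mul_nonneg ht.1 hl.1)
      (mul_nonneg (by linarith [ht.2]) hm.1), by nlinarith [hl.2, hm.2, ht.1, ht.2]⟩, ?_⟩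
    exact comb_comb hA.2.2.2.1 hB.2.2.2.1 hl.1 hl.2 hm.1 hm.2 ht.1 ht.2
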